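/- Let n ≥ 2 and d = n+1. Let H : ℝ^n \ {0} → ℝ satisfy the C-Z(1)(i) condition: H ∈ C¹(ℝ^n \ {0}) with |∇_x^j ∂_t^k H(x,t)| ≤ C_{j,k} ‖(x,t)‖^{-d-j-2k} for 0 ≤ j+k ≤ 1. Define H̃(x,t) := ∫_1^∞ r^d H(rx, r²t) r^{-2} dr for (x,t) ≠ 0. Then: (a) the integral converges absolutely and H̃ satisfies the C-Z(1)(i) condition with constants C'_{j,k} that are dimensional multiples of the C_{j,k}; (b) if H is even in the space variable (H(−x,t) = H(x,t)), then so is H̃; and if H is odd in the space variable, then so is H̃. -/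

import Mathlib

open MeasureTheory
open scoped ENNReal RealInnerProductSpace

noncomputable section

/-- The parabolic norm `‖(x,t)‖ = (|x|⁴ + t²)^(1/4)` on space-time `ℝ^m × ℝ`. -/
def pnorm {m : ℕ} (p : EuclideanSpace ℝ (Fin m) × ℝ) : ℝ :=
  (‖p.1‖ ^ 4 + p.2 ^ 2) ^ ((4 : ℝ)⁻¹)

/-- The parabolic C-Z(N)(i) condition with homogeneous dimension `d` and constants `C j k`:
`C^N` smoothness away from the origin, together with the bounds
`|∇_x^j ∂_t^k H(x,t)| ≤ C j k * ‖(x,t)‖^(-d-j-2k)` for all `0 ≤ j+k ≤ N`. -/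
def CZCond {m : ℕ} {F : Type*} [NormedAddCommGroup F] [NormedSpace ℝ F]
    (d : ℝ) (N : ℕ) (C : ℕ → ℕ → ℝ) (H : EuclideanSpace ℝ (Fin m) × ℝ → F) : Prop :=
  ContDiffOn ℝ N H {p | p ≠ 0} ∧
  ∀ j k : ℕ, j + k ≤ N → ∀ (x : EuclideanSpace ℝ (Fin m)) (t : ℝ),
    (x, t) ≠ 0 →
    ‖iteratedFDeriv ℝ j (fun y => iteratedDeriv k (fun s => H (y, s)) t) x‖
      ≤ C j k * pnorm (x, t) ^ (-d - j - 2 * k)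

/-- `H̃(x,t) = ∫_1^∞ r^d H(rx, r²t) r⁻² dr`. -/
def Htilde {m : ℕ} (d : ℝ) (H : EuclideanSpace ℝ (Fin m) × ℝ → ℝ)
    (p : EuclideanSpace ℝ (Fin m) × ℝ) : ℝ :=
  ∫ r in Set.Ioi (1 : ℝ), r ^ d * H (r • p.1, r ^ 2 * p.2) / r ^ 2

namespace S9

variable {m : ℕ}

lemma pnorm_nonneg (p : EuclideanSpace ℝ (Fin m) × ℝ) : 0 ≤ pnorm p :=
  Real.rpow_nonneg (by positivity) _

lemma pnorm_pos {p : EuclideanSpace ℝ (Fin m) × ℝ} (hp : p ≠ 0) : 0 < pnorm p := by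
  apply Real.rpow_pos_of_pos
  have : p.1 ≠ 0 ∨ p.2 ≠ 0 := by
    by_contra hc
    push_neg at hc
    exact hp (Prod.ext hc.1 hc.2)
  rcases this with h1 | h2
  · have : 0 < ‖p.1‖ := norm_pos_iff.2 h1
    positivity
  · positivity

lemma pnorm_scale {r : ℝ} (hr : 0 < r) (x : EuclideanSpace ℝ (Fin m)) (t : ℝ) :
    pnorm (r • x, r ^ 2 * t) = r * pnorm (x, t) := by
  unfold pnorm
  simp only [norm_smul, Real.norm_eq_abs, abs_of_pos hr]
  have h1 : (|r| * ‖x‖) ^ 4 + (r ^ 2 * t) ^ 2 = r ^ 4 * (‖x‖ ^ 4 + t ^ 2) := by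
    rw [abs_of_pos hr]; ring
  rw [abs_of_pos hr] at h1
  rw [show (r * ‖x‖) ^ 4 + (r ^ 2 * t) ^ 2 = r ^ 4 * (‖x‖ ^ 4 + t ^ 2) by ring]
  rw [Real.mul_rpow (by positivity) (by positivity)]
  congr 1
  rw [← Real.rpow_natCast r 4, ← Real.rpow_mul hr.le]
  norm_num

lemma dil_ne {r : ℝ} (hr : 0 < r) {p : EuclideanSpace ℝ (Fin m) × ℝ} (hp : p ≠ 0) :
    ((r • p.1, r ^ 2 * p.2) : EuclideanSpace ℝ (Fin m) × ℝ) ≠ 0 := by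
  intro h
  rw [Prod.ext_iff] at h
  apply hp
  apply Prod.ext
  · have := h.1
    simpa [smul_eq_zero, hr.ne'] using this
  · have := h.2
    simp only [Prod.snd_zero, mul_eq_zero] at this
    rcases this with h' | h'
    · exact absurd h' (by positivity)
    · exact h'


lemma rc3 {r : ℝ} (hr : 0 < r) (a b c : ℝ) :
    r ^ a / r ^ (2 : ℕ) * r ^ b * r ^ c = r ^ (a + b + c - 2) := by
  rw [← Real.rpow_natCast r 2, div_eq_mul_inv, ← Real.rpow_neg hr.le,
    ← Real.rpow_add hr, ← Real.rpow_add hr, ← Real.rpow_add hr]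
  ring_nf


variable {d : ℝ} {CK : ℕ → ℕ → ℝ} {H : EuclideanSpace ℝ (Fin m) × ℝ → ℝ}

lemma CK_nonneg (h : CZCond d 1 CK H) {j k : ℕ} (hjk : j + k ≤ 1) : 0 ≤ CK j k := by
  have h0 : ((0 : EuclideanSpace ℝ (Fin m)), (1 : ℝ)) ≠ 0 := by
    simp [Prod.ext_iff]
  have := h.2 j k hjk 0 1 h0
  have hpn : pnorm ((0 : EuclideanSpace ℝ (Fin m)), (1 : ℝ)) = 1 := by
    simp [pnorm]
  rw [hpn, Real.one_rpow, mul_one] at this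
  exact le_trans (norm_nonneg _) this

lemma diffAt (h : CZCond d 1 CK H) {p : EuclideanSpace ℝ (Fin m) × ℝ} (hp : p ≠ 0) :
    DifferentiableAt ℝ H p :=
  (h.1.differentiableOn (by simp)).differentiableAt (isOpen_ne.mem_nhds hp)

lemma fderiv_bound (h : CZCond d 1 CK H) {p : EuclideanSpace ℝ (Fin m) × ℝ} (hp : p ≠ 0)
    (v : EuclideanSpace ℝ (Fin m)) (s : ℝ) :
    ‖fderiv ℝ H p (v, s)‖ ≤
      CK 1 0 * pnorm p ^ (-d - 1) * ‖v‖ + CK 0 1 * pnorm p ^ (-d - 2) * |s| := by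
  have hd := (diffAt h hp).hasFDerivAt
  set L := fderiv ℝ H p with hL
  -- spatial part
  have h1 : HasFDerivAt (fun y => H (y, p.2))
      (L.comp (ContinuousLinearMap.inl ℝ (EuclideanSpace ℝ (Fin m)) ℝ)) p.1 := by
    have := hd.comp p.1 (hasFDerivAt_prodMk_left (𝕜 := ℝ) p.1 p.2)
    exact this
  have hb1 : ‖L.comp (ContinuousLinearMap.inl ℝ (EuclideanSpace ℝ (Fin m)) ℝ)‖
      ≤ CK 1 0 * pnorm p ^ (-d - 1) := by
    have hx := h.2 1 0 (by norm_num) p.1 p.2 (by simpa using hp)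
    simp only [iteratedDeriv_zero] at hx
    rw [show ‖iteratedFDeriv ℝ 1 (fun y => H (y, p.2)) p.1‖
        = ‖fderiv ℝ (fun y => H (y, p.2)) p.1‖ from by
      rw [← norm_iteratedFDeriv_fderiv (n := 0), norm_iteratedFDeriv_zero]] at hx
    rw [h1.fderiv] at hx
    convert hx using 2 <;> push_cast <;> ring
  -- time part
  have h2 : HasDerivAt (fun s => H (p.1, s)) (L ((0 : EuclideanSpace ℝ (Fin m)), 1)) p.2 := by
    have hcurve : HasDerivAt (fun s : ℝ => ((p.1, s) : EuclideanSpace ℝ (Fin m) × ℝ))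
        (((0 : EuclideanSpace ℝ (Fin m)), 1)) p.2 :=
      (hasDerivAt_const p.2 p.1).prodMk (hasDerivAt_id p.2)
    have := hd.comp_hasDerivAt p.2 hcurve
    exact this
  have hb2 : ‖L ((0 : EuclideanSpace ℝ (Fin m)), 1)‖ ≤ CK 0 1 * pnorm p ^ (-d - 2) := by
    have hx := h.2 0 1 (by norm_num) p.1 p.2 (by simpa using hp)
    simp only [iteratedDeriv_one, norm_iteratedFDeriv_zero] at hx
    rw [h2.deriv] at hx
    convert hx using 2 <;> push_cast <;> ring
  -- combine
  have hsplit : L (v, s) = L (v, 0) + L ((0 : EuclideanSpace ℝ (Fin m)), s) := by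
    rw [← map_add]
    norm_num
  rw [hsplit]
  refine (norm_add_le _ _).trans (add_le_add ?_ ?_)
  · have : L (v, 0) = (L.comp (ContinuousLinearMap.inl ℝ (EuclideanSpace ℝ (Fin m)) ℝ)) v := rfl
    rw [this]
    exact (L.comp _).le_opNorm v |>.trans (by
      exact mul_le_mul_of_nonneg_right hb1 (norm_nonneg v))
  · have : ((0 : EuclideanSpace ℝ (Fin m)), s)
        = s • (((0 : EuclideanSpace ℝ (Fin m)), 1) : EuclideanSpace ℝ (Fin m) × ℝ) := by
      simp [Prod.smul_mk]
    rw [this, L.map_smul, norm_smul, Real.norm_eq_abs, mul_comm]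
    exact mul_le_mul_of_nonneg_right hb2 (abs_nonneg s)


def A (r : ℝ) : (EuclideanSpace ℝ (Fin m) × ℝ) →L[ℝ] (EuclideanSpace ℝ (Fin m) × ℝ) :=
  (r • ContinuousLinearMap.id ℝ (EuclideanSpace ℝ (Fin m))).prodMap
    ((r ^ 2) • ContinuousLinearMap.id ℝ ℝ)

lemma A_apply (r : ℝ) (p : EuclideanSpace ℝ (Fin m) × ℝ) :
    A r p = ((r • p.1, r ^ 2 * p.2) : EuclideanSpace ℝ (Fin m) × ℝ) := by
  simp [A, Prod.map, smul_eq_mul]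

/-- the fderiv in `q` of the integrand. -/
def G (d : ℝ) (H : EuclideanSpace ℝ (Fin m) × ℝ → ℝ) (q : EuclideanSpace ℝ (Fin m) × ℝ)
    (r : ℝ) : (EuclideanSpace ℝ (Fin m) × ℝ) →L[ℝ] ℝ :=
  (r ^ d / r ^ 2) • ((fderiv ℝ H ((r • q.1, r ^ 2 * q.2))).comp (A r))

lemma hasFDerivAt_integrand (h : CZCond d 1 CK H) {r : ℝ} (hr : 0 < r)
    {q : EuclideanSpace ℝ (Fin m) × ℝ} (hq : q ≠ 0) :
    HasFDerivAt (fun q : EuclideanSpace ℝ (Fin m) × ℝ =>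
      r ^ d * H (r • q.1, r ^ 2 * q.2) / r ^ 2) (G d H q r) q := by
  have hA : HasFDerivAt (fun q : EuclideanSpace ℝ (Fin m) × ℝ =>
      ((r • q.1, r ^ 2 * q.2) : EuclideanSpace ℝ (Fin m) × ℝ)) (A r) q := by
    have := (A (m := m) r).hasFDerivAt (x := q)
    apply this.congr_of_eventuallyEq
    filter_upwards with y
    rw [A_apply]
  have hH : HasFDerivAt H (fderiv ℝ H ((r • q.1, r ^ 2 * q.2)))
      ((r • q.1, r ^ 2 * q.2) : EuclideanSpace ℝ (Fin m) × ℝ) :=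
    (diffAt h (dil_ne hr hq)).hasFDerivAt
  have hcomp := (hH.comp q hA).const_mul (r ^ d / r ^ 2)
  apply hcomp.congr_of_eventuallyEq
  filter_upwards with y
  simp only [Function.comp]
  ring

lemma G_apply_bound (h : CZCond d 1 CK H) {r : ℝ} (hr : 0 < r)
    {q : EuclideanSpace ℝ (Fin m) × ℝ} (hq : q ≠ 0)
    (v : EuclideanSpace ℝ (Fin m)) (s : ℝ) :
    ‖G d H q r (v, s)‖ ≤ r ^ (-2 : ℝ) *
      (CK 1 0 * pnorm q ^ (-d - 1) * ‖v‖ + CK 0 1 * pnorm q ^ (-d - 2) * |s|) := by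
  have hP := pnorm_pos hq
  have hdil := dil_ne hr hq
  have happ : G d H q r (v, s)
      = (r ^ d / r ^ 2) * fderiv ℝ H ((r • q.1, r ^ 2 * q.2)) (r • v, r ^ 2 * s) := by
    simp [G, A_apply, smul_eq_mul]
  rw [happ, norm_mul]
  have hb := fderiv_bound h hdil (r • v) (r ^ 2 * s)
  rw [show pnorm ((r • q.1, r ^ 2 * q.2) : EuclideanSpace ℝ (Fin m) × ℝ)
      = r * pnorm (q.1, q.2) from pnorm_scale hr q.1 q.2] at hb
  have hq' : pnorm ((q.1, q.2) : EuclideanSpace ℝ (Fin m) × ℝ) = pnorm q := by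
    congr
  rw [hq'] at hb
  have hnorm1 : ‖r • v‖ = r * ‖v‖ := by
    rw [norm_smul, Real.norm_eq_abs, abs_of_pos hr]
  have hnorm2 : |r ^ 2 * s| = r ^ 2 * |s| := by
    rw [abs_mul, abs_of_pos (by positivity : (0:ℝ) < r ^ 2)]
  rw [hnorm1, hnorm2] at hb
  rw [Real.mul_rpow hr.le (pnorm_nonneg q), Real.mul_rpow hr.le (pnorm_nonneg q)] at hb
  have habs : ‖r ^ d / r ^ 2‖ = r ^ d / r ^ (2:ℕ) := by
    rw [Real.norm_eq_abs, abs_of_pos]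
    positivity
  rw [habs]
  calc r ^ d / r ^ (2:ℕ) * ‖fderiv ℝ H ((r • q.1, r ^ 2 * q.2)) (r • v, r ^ 2 * s)‖
      ≤ r ^ d / r ^ (2:ℕ) * (CK 1 0 * (r ^ (-d - 1) * pnorm q ^ (-d - 1)) * (r * ‖v‖)
        + CK 0 1 * (r ^ (-d - 2) * pnorm q ^ (-d - 2)) * (r ^ 2 * |s|)) := by
        apply mul_le_mul_of_nonneg_left hb (by positivity)
    _ = r ^ (-2 : ℝ) *
      (CK 1 0 * pnorm q ^ (-d - 1) * ‖v‖ + CK 0 1 * pnorm q ^ (-d - 2) * |s|) := by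
        have e1 : r ^ d / r ^ (2:ℕ) * r ^ (-d-1) * r ^ (1:ℝ) = r ^ (-2:ℝ) := by
          rw [rc3 hr]; congr 1; ring
        have e2 : r ^ d / r ^ (2:ℕ) * r ^ (-d-2) * r ^ (2:ℝ) = r ^ (-2:ℝ) := by
          rw [rc3 hr]; congr 1; ring
        rw [Real.rpow_one] at e1
        have h2' : r ^ (2:ℝ) = r ^ (2:ℕ) := by
          rw [← Real.rpow_natCast r 2]; norm_num
        rw [h2'] at e2
        linear_combination (CK 1 0 * pnorm q ^ (-d-1) * ‖v‖) * e1
          + (CK 0 1 * pnorm q ^ (-d-2) * |s|) * e2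

lemma G_opNorm_bound (h : CZCond d 1 CK H) {r : ℝ} (hr : 0 < r)
    {q : EuclideanSpace ℝ (Fin m) × ℝ} (hq : q ≠ 0) :
    ‖G d H q r‖ ≤ r ^ (-2 : ℝ) *
      (CK 1 0 * pnorm q ^ (-d - 1) + CK 0 1 * pnorm q ^ (-d - 2)) := by
  have h10 := CK_nonneg h (j := 1) (k := 0) (by norm_num)
  have h01 := CK_nonneg h (j := 0) (k := 1) (by norm_num)
  apply ContinuousLinearMap.opNorm_le_bound
  · have := pnorm_nonneg q
    positivity
  · rintro ⟨v, s⟩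
    refine (G_apply_bound h hr hq v s).trans ?_
    have hv : ‖v‖ ≤ ‖((v, s) : EuclideanSpace ℝ (Fin m) × ℝ)‖ := norm_fst_le (v, s)
    have hs : |s| ≤ ‖((v, s) : EuclideanSpace ℝ (Fin m) × ℝ)‖ := norm_snd_le (v, s)
    have hP1 : (0:ℝ) ≤ CK 1 0 * pnorm q ^ (-d - 1) :=
      mul_nonneg h10 (Real.rpow_nonneg (pnorm_nonneg q) _)
    have hP2 : (0:ℝ) ≤ CK 0 1 * pnorm q ^ (-d - 2) :=
      mul_nonneg h01 (Real.rpow_nonneg (pnorm_nonneg q) _)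
    have key : CK 1 0 * pnorm q ^ (-d - 1) * ‖v‖ + CK 0 1 * pnorm q ^ (-d - 2) * |s|
        ≤ (CK 1 0 * pnorm q ^ (-d - 1) + CK 0 1 * pnorm q ^ (-d - 2))
          * ‖((v, s) : EuclideanSpace ℝ (Fin m) × ℝ)‖ := by
      nlinarith [abs_nonneg s, norm_nonneg v]
    calc r ^ (-2:ℝ) * (CK 1 0 * pnorm q ^ (-d - 1) * ‖v‖ + CK 0 1 * pnorm q ^ (-d - 2) * |s|)
        ≤ r ^ (-2:ℝ) * ((CK 1 0 * pnorm q ^ (-d - 1) + CK 0 1 * pnorm q ^ (-d - 2))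
          * ‖((v, s) : EuclideanSpace ℝ (Fin m) × ℝ)‖) :=
          mul_le_mul_of_nonneg_left key (by positivity)
      _ = r ^ (-2:ℝ) * (CK 1 0 * pnorm q ^ (-d - 1) + CK 0 1 * pnorm q ^ (-d - 2))
          * ‖((v, s) : EuclideanSpace ℝ (Fin m) × ℝ)‖ := by ring



lemma rc2 {r : ℝ} (hr : 0 < r) (a b : ℝ) :
    r ^ a / r ^ (2 : ℕ) * r ^ b = r ^ (a + b - 2) := by
  have := rc3 hr a b 0
  simpa [Real.rpow_zero] using this

lemma cont_dil {q : EuclideanSpace ℝ (Fin m) × ℝ} :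
    Continuous (fun r : ℝ => ((r • q.1, r ^ 2 * q.2) : EuclideanSpace ℝ (Fin m) × ℝ)) :=
  (continuous_id.smul continuous_const).prodMk ((continuous_pow 2).mul continuous_const)

lemma contOn_integrand (h : CZCond d 1 CK H) {q : EuclideanSpace ℝ (Fin m) × ℝ} (hq : q ≠ 0) :
    ContinuousOn (fun r : ℝ => r ^ d * H (r • q.1, r ^ 2 * q.2) / r ^ 2) (Set.Ioi 1) := by
  intro r hr
  have hr1 : (1:ℝ) < r := hr
  have hr0 : (0:ℝ) < r := lt_trans one_pos hr1
  apply ContinuousAt.continuousWithinAt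
  have c1 : ContinuousAt (fun r : ℝ => r ^ d) r :=
    Real.continuousAt_rpow_const r d (Or.inl hr0.ne')
  have hHc : ContinuousAt H ((r • q.1, r ^ 2 * q.2) : EuclideanSpace ℝ (Fin m) × ℝ) :=
    h.1.continuousOn.continuousAt (isOpen_ne.mem_nhds (dil_ne hr0 hq))
  have c2 := hHc.comp (g := H)
    (f := fun r : ℝ => ((r • q.1, r ^ 2 * q.2) : EuclideanSpace ℝ (Fin m) × ℝ))
    (cont_dil (q := q)).continuousAt
  exact (c1.mul c2).div (continuous_pow 2).continuousAt (by positivity)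

lemma meas_integrand (h : CZCond d 1 CK H) {q : EuclideanSpace ℝ (Fin m) × ℝ} (hq : q ≠ 0) :
    AEStronglyMeasurable (fun r : ℝ => r ^ d * H (r • q.1, r ^ 2 * q.2) / r ^ 2)
      (volume.restrict (Set.Ioi 1)) :=
  (contOn_integrand h hq).aestronglyMeasurable measurableSet_Ioi

lemma cont_A : Continuous (fun r : ℝ => (A r : (EuclideanSpace ℝ (Fin m) × ℝ) →L[ℝ]
    (EuclideanSpace ℝ (Fin m) × ℝ))) := by
  unfold A
  exact ((ContinuousLinearMap.prodMapL ℝ (EuclideanSpace ℝ (Fin m)) (EuclideanSpace ℝ (Fin m))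
    ℝ ℝ).continuous).comp ((continuous_id.smul continuous_const).prodMk
    ((continuous_pow 2).smul continuous_const))

lemma contOn_G_r (h : CZCond d 1 CK H) {q : EuclideanSpace ℝ (Fin m) × ℝ} (hq : q ≠ 0) :
    ContinuousOn (fun r : ℝ => G d H q r) (Set.Ioi 1) := by
  intro r hr
  have hr0 : (0:ℝ) < r := lt_trans one_pos hr
  apply ContinuousAt.continuousWithinAt
  have c1 : ContinuousAt (fun r : ℝ => r ^ d / r ^ 2) r :=
    (Real.continuousAt_rpow_const r d (Or.inl hr0.ne')).div
      (continuous_pow 2).continuousAt (by positivity)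
  have hfc : ContinuousAt (fderiv ℝ H)
      ((r • q.1, r ^ 2 * q.2) : EuclideanSpace ℝ (Fin m) × ℝ) :=
    (h.1.continuousOn_fderiv_of_isOpen isOpen_ne le_rfl).continuousAt
      (isOpen_ne.mem_nhds (dil_ne hr0 hq))
  have c2 := hfc.comp (g := fderiv ℝ H)
    (f := fun r : ℝ => ((r • q.1, r ^ 2 * q.2) : EuclideanSpace ℝ (Fin m) × ℝ))
    (cont_dil (q := q)).continuousAt
  have hb := (ContinuousLinearMap.compL ℝ (EuclideanSpace ℝ (Fin m) × ℝ)
    (EuclideanSpace ℝ (Fin m) × ℝ) ℝ).continuous₂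
  have c4 := (hb.continuousAt).comp (x := r) (c2.prodMk cont_A.continuousAt)
  exact c1.smul c4

lemma meas_G_r (h : CZCond d 1 CK H) {q : EuclideanSpace ℝ (Fin m) × ℝ} (hq : q ≠ 0) :
    AEStronglyMeasurable (fun r : ℝ => G d H q r) (volume.restrict (Set.Ioi 1)) :=
  (contOn_G_r h hq).aestronglyMeasurable measurableSet_Ioi

lemma cont_G_q (h : CZCond d 1 CK H) {r : ℝ} (hr : 0 < r)
    {p : EuclideanSpace ℝ (Fin m) × ℝ} (hp : p ≠ 0) :
    ContinuousAt (fun q : EuclideanSpace ℝ (Fin m) × ℝ => G d H q r) p := by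
  have hdil : Continuous (fun q : EuclideanSpace ℝ (Fin m) × ℝ =>
      ((r • q.1, r ^ 2 * q.2) : EuclideanSpace ℝ (Fin m) × ℝ)) :=
    (continuous_fst.const_smul r).prodMk (continuous_snd.const_mul _)
  have hfc : ContinuousAt (fderiv ℝ H)
      ((r • p.1, r ^ 2 * p.2) : EuclideanSpace ℝ (Fin m) × ℝ) :=
    (h.1.continuousOn_fderiv_of_isOpen isOpen_ne le_rfl).continuousAt
      (isOpen_ne.mem_nhds (dil_ne hr hp))
  have c2 := hfc.comp (g := fderiv ℝ H)
    (f := fun q : EuclideanSpace ℝ (Fin m) × ℝ =>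
      ((r • q.1, r ^ 2 * q.2) : EuclideanSpace ℝ (Fin m) × ℝ))
    hdil.continuousAt
  have hb := (ContinuousLinearMap.compL ℝ (EuclideanSpace ℝ (Fin m) × ℝ)
    (EuclideanSpace ℝ (Fin m) × ℝ) ℝ).continuous₂
  have c4 := (hb.continuousAt).comp (x := p) (c2.prodMk (continuousAt_const (y := A r)))
  exact (continuousAt_const (y := r ^ d / r ^ 2)).smul c4

lemma pnorm_ball_lb {p q : EuclideanSpace ℝ (Fin m) × ℝ} (hp : p ≠ 0) (hq : ‖p‖ / 2 ≤ ‖q‖) :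
    (min ((‖p‖ / 2) ^ 4) ((‖p‖ / 2) ^ 2)) ^ ((4:ℝ)⁻¹) ≤ pnorm q := by
  set m0 := ‖p‖ / 2 with hm0def
  have hm0 : 0 < m0 := by
    have : 0 < ‖p‖ := norm_pos_iff.2 hp
    positivity
  have hmax : m0 ≤ max ‖q.1‖ ‖q.2‖ := by
    rw [← Prod.norm_def]; exact hq
  have hS : min (m0 ^ 4) (m0 ^ 2) ≤ ‖q.1‖ ^ 4 + q.2 ^ 2 := by
    rcases le_max_iff.1 hmax with h1 | h2
    · have : m0 ^ 4 ≤ ‖q.1‖ ^ 4 := pow_le_pow_left₀ hm0.le h1 4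
      have h2' : (0:ℝ) ≤ q.2 ^ 2 := sq_nonneg _
      calc min (m0 ^ 4) (m0 ^ 2) ≤ m0 ^ 4 := min_le_left _ _
        _ ≤ ‖q.1‖ ^ 4 + q.2 ^ 2 := by linarith
    · have h2'' : m0 ^ 2 ≤ ‖q.2‖ ^ 2 := pow_le_pow_left₀ hm0.le h2 2
      rw [Real.norm_eq_abs, sq_abs] at h2''
      have h1' : (0:ℝ) ≤ ‖q.1‖ ^ 4 := by positivity
      calc min (m0 ^ 4) (m0 ^ 2) ≤ m0 ^ 2 := min_le_right _ _
        _ ≤ ‖q.1‖ ^ 4 + q.2 ^ 2 := by linarith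
  exact Real.rpow_le_rpow (by positivity) hS (by norm_num)

lemma integrable_integrand (h : CZCond d 1 CK H) {p : EuclideanSpace ℝ (Fin m) × ℝ}
    (hp : p ≠ 0) :
    IntegrableOn (fun r : ℝ => r ^ d * H (r • p.1, r ^ 2 * p.2) / r ^ 2) (Set.Ioi 1) := by
  have hg : IntegrableOn (fun r : ℝ => (CK 0 0 * pnorm p ^ (-d)) * r ^ (-2:ℝ))
      (Set.Ioi 1) :=
    (integrableOn_Ioi_rpow_of_lt (by norm_num) one_pos).const_mul _
  refine Integrable.mono' hg (meas_integrand h hp) ?_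
  rw [ae_restrict_iff' measurableSet_Ioi]
  filter_upwards with r hr
  have hr0 : (0:ℝ) < r := lt_trans one_pos hr
  have hb := h.2 0 0 (by norm_num) (r • p.1) (r ^ 2 * p.2) (dil_ne hr0 hp)
  simp only [iteratedDeriv_zero, norm_iteratedFDeriv_zero, Nat.cast_zero] at hb
  rw [show (-d - 0 - 2 * 0 : ℝ) = -d from by ring] at hb
  rw [show pnorm ((r • p.1, r ^ 2 * p.2) : EuclideanSpace ℝ (Fin m) × ℝ)
      = r * pnorm (p.1, p.2) from pnorm_scale hr0 p.1 p.2, Prod.mk.eta] at hb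
  rw [Real.mul_rpow hr0.le (pnorm_nonneg p)] at hb
  have hCK := CK_nonneg h (j := 0) (k := 0) (by norm_num)
  have hnn : ‖r ^ d * H (r • p.1, r ^ 2 * p.2) / r ^ 2‖
      = r ^ d / r ^ (2:ℕ) * ‖H (r • p.1, r ^ 2 * p.2)‖ := by
    rw [norm_div, norm_mul, Real.norm_eq_abs (r ^ d), abs_of_pos (by positivity),
      Real.norm_eq_abs (r ^ 2), abs_of_pos (by positivity)]
    ring
  rw [hnn]
  have e := rc2 hr0 d (-d)
  rw [show d + -d - 2 = (-2:ℝ) from by ring] at e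
  calc r ^ d / r ^ (2:ℕ) * ‖H (r • p.1, r ^ 2 * p.2)‖
      ≤ r ^ d / r ^ (2:ℕ) * (CK 0 0 * (r ^ (-d) * pnorm p ^ (-d))) :=
        mul_le_mul_of_nonneg_left hb (by positivity)
    _ = CK 0 0 * pnorm p ^ (-d) * r ^ (-2:ℝ) := by
        linear_combination (CK 0 0 * pnorm p ^ (-d)) * e


lemma ball_facts {p q : EuclideanSpace ℝ (Fin m) × ℝ} (hp : p ≠ 0)
    (hq : q ∈ Metric.ball p (‖p‖ / 2)) : ‖p‖ / 2 ≤ ‖q‖ ∧ q ≠ 0 := by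
  have hd : dist q p < ‖p‖ / 2 := hq
  have h1 : ‖p‖ - ‖q‖ ≤ dist q p := by
    rw [dist_eq_norm]
    calc ‖p‖ - ‖q‖ ≤ ‖p - q‖ := by
          have := norm_sub_norm_le p q
          linarith
      _ = ‖q - p‖ := by rw [norm_sub_rev]
  have hp0 : 0 < ‖p‖ := norm_pos_iff.2 hp
  constructor
  · linarith
  · intro h0
    rw [h0, norm_zero] at h1
    rw [h0] at hd
    linarith
noncomputable def eta (p : EuclideanSpace ℝ (Fin m) × ℝ) : ℝ :=
  (min ((‖p‖ / 2) ^ 4) ((‖p‖ / 2) ^ 2)) ^ ((4:ℝ)⁻¹)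

lemma eta_pos {p : EuclideanSpace ℝ (Fin m) × ℝ} (hp : p ≠ 0) : 0 < eta p := by
  have hp0 : 0 < ‖p‖ := norm_pos_iff.2 hp
  have : 0 < min ((‖p‖ / 2) ^ 4) ((‖p‖ / 2) ^ 2) := lt_min (by positivity) (by positivity)
  exact Real.rpow_pos_of_pos this _

lemma bound_int (c : ℝ) : IntegrableOn (fun r : ℝ => c * r ^ (-2:ℝ)) (Set.Ioi 1) :=
  (integrableOn_Ioi_rpow_of_lt (by norm_num) one_pos).const_mul _

/-- uniform bound for the opnorm of `G` over the ball of radius `‖p‖/2`. -/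
lemma G_ball_bound (h : CZCond d 1 CK H) (hd0 : 0 ≤ d)
    {p q : EuclideanSpace ℝ (Fin m) × ℝ} (hp : p ≠ 0)
    (hq : q ∈ Metric.ball p (‖p‖ / 2)) {r : ℝ} (hr : r ∈ Set.Ioi (1:ℝ)) :
    ‖G d H q r‖ ≤ (CK 1 0 * eta p ^ (-d-1) + CK 0 1 * eta p ^ (-d-2)) * r ^ (-2:ℝ) := by
  obtain ⟨hq1, hq0⟩ := ball_facts hp hq
  have hr0 : (0:ℝ) < r := lt_trans one_pos hr
  have hη := eta_pos hp
  have hηq : eta p ≤ pnorm q := pnorm_ball_lb hp hq1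
  have h10 := CK_nonneg h (j := 1) (k := 0) (by norm_num)
  have h01 := CK_nonneg h (j := 0) (k := 1) (by norm_num)
  refine (G_opNorm_bound h hr0 hq0).trans ?_
  have e1 : pnorm q ^ (-d-1) ≤ eta p ^ (-d-1) :=
    Real.rpow_le_rpow_of_nonpos hη hηq (by linarith)
  have e2 : pnorm q ^ (-d-2) ≤ eta p ^ (-d-2) :=
    Real.rpow_le_rpow_of_nonpos hη hηq (by linarith)
  have hrn : (0:ℝ) ≤ r ^ (-2:ℝ) := Real.rpow_nonneg hr0.le _
  calc r ^ (-2:ℝ) * (CK 1 0 * pnorm q ^ (-d - 1) + CK 0 1 * pnorm q ^ (-d - 2))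
      ≤ r ^ (-2:ℝ) * (CK 1 0 * eta p ^ (-d-1) + CK 0 1 * eta p ^ (-d-2)) := by
        apply mul_le_mul_of_nonneg_left _ hrn
        apply add_le_add (mul_le_mul_of_nonneg_left e1 h10)
          (mul_le_mul_of_nonneg_left e2 h01)
    _ = (CK 1 0 * eta p ^ (-d-1) + CK 0 1 * eta p ^ (-d-2)) * r ^ (-2:ℝ) := by ring

lemma htilde_hasFDerivAt (h : CZCond d 1 CK H) (hd0 : 0 ≤ d)
    {p : EuclideanSpace ℝ (Fin m) × ℝ} (hp : p ≠ 0) :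
    HasFDerivAt (Htilde d H) (∫ r in Set.Ioi (1:ℝ), G d H p r) p := by
  have hp0 : 0 < ‖p‖ := norm_pos_iff.2 hp
  have hε : (0:ℝ) < ‖p‖ / 2 := by positivity
  have key := hasFDerivAt_integral_of_dominated_of_fderiv_le
    (F := fun (q : EuclideanSpace ℝ (Fin m) × ℝ) (r : ℝ) =>
      r ^ d * H (r • q.1, r ^ 2 * q.2) / r ^ 2)
    (F' := fun q r => G d H q r)
    (μ := volume.restrict (Set.Ioi (1:ℝ))) (x₀ := p)
    (bound := fun r => (CK 1 0 * eta p ^ (-d-1) + CK 0 1 * eta p ^ (-d-2)) * r ^ (-2:ℝ))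
    (Metric.ball_mem_nhds p hε) ?_ (integrable_integrand h hp) (meas_G_r h hp) ?_ (bound_int _) ?_
  · exact key
  · filter_upwards [Metric.ball_mem_nhds p hε] with q hq
    exact meas_integrand h (ball_facts hp hq).2
  · rw [ae_restrict_iff' measurableSet_Ioi]
    filter_upwards with r hr
    intro q hq
    exact G_ball_bound h hd0 hp hq hr
  · rw [ae_restrict_iff' measurableSet_Ioi]
    filter_upwards with r hr
    intro q hq
    exact hasFDerivAt_integrand h (lt_trans one_pos hr) (ball_facts hp hq).2

lemma integrable_G (h : CZCond d 1 CK H) (hd0 : 0 ≤ d)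
    {p : EuclideanSpace ℝ (Fin m) × ℝ} (hp : p ≠ 0) :
    Integrable (fun r : ℝ => G d H p r) (volume.restrict (Set.Ioi 1)) := by
  have hp0 : 0 < ‖p‖ := norm_pos_iff.2 hp
  refine Integrable.mono' (bound_int (CK 1 0 * eta p ^ (-d-1) + CK 0 1 * eta p ^ (-d-2)))
    (meas_G_r h hp) ?_
  rw [ae_restrict_iff' measurableSet_Ioi]
  filter_upwards with r hr
  exact G_ball_bound h hd0 hp (Metric.mem_ball_self (by positivity)) hr

lemma contOn_D (h : CZCond d 1 CK H) (hd0 : 0 ≤ d) :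
    ContinuousOn (fun p : EuclideanSpace ℝ (Fin m) × ℝ => ∫ r in Set.Ioi (1:ℝ), G d H p r)
      {p : EuclideanSpace ℝ (Fin m) × ℝ | p ≠ 0} := by
  intro p hp
  apply ContinuousAt.continuousWithinAt
  have hp0 : 0 < ‖p‖ := norm_pos_iff.2 hp
  apply MeasureTheory.continuousAt_of_dominated
    (bound := fun r => (CK 1 0 * eta p ^ (-d-1) + CK 0 1 * eta p ^ (-d-2)) * r ^ (-2:ℝ))
  · filter_upwards [Metric.ball_mem_nhds p (by positivity : (0:ℝ) < ‖p‖ / 2)] with q hq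
    exact meas_G_r h (ball_facts hp hq).2
  · filter_upwards [Metric.ball_mem_nhds p (by positivity : (0:ℝ) < ‖p‖ / 2)] with q hq
    rw [ae_restrict_iff' measurableSet_Ioi]
    filter_upwards with r hr
    exact G_ball_bound h hd0 hp hq hr
  · exact bound_int _
  · rw [ae_restrict_iff' measurableSet_Ioi]
    filter_upwards with r hr
    exact cont_G_q h (lt_trans one_pos hr) hp


lemma htilde_contDiffOn (h : CZCond d 1 CK H) (hd0 : 0 ≤ d) :
    ContDiffOn ℝ (1:ℕ) (Htilde d H) {p : EuclideanSpace ℝ (Fin m) × ℝ | p ≠ 0} := by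
  have hdiff : DifferentiableOn ℝ (Htilde d H) {p : EuclideanSpace ℝ (Fin m) × ℝ | p ≠ 0} :=
    fun p hp => ((htilde_hasFDerivAt h hd0 hp).differentiableAt).differentiableWithinAt
  have hcast : ((1:ℕ) : WithTop ℕ∞) = 0 + 1 := by simp
  rw [hcast, contDiffOn_succ_iff_fderiv_of_isOpen isOpen_ne]
  refine ⟨hdiff, by simp, ?_⟩
  rw [contDiffOn_zero]
  exact (contOn_D h hd0).congr (fun p hp => (htilde_hasFDerivAt h hd0 hp).fderiv)

lemma int_rm2 : ∫ r in Set.Ioi (1:ℝ), r ^ (-2:ℝ) = 1 := by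
  rw [integral_Ioi_rpow_of_lt (by norm_num) one_pos]
  norm_num

lemma int_c_rm2 (c : ℝ) : ∫ r in Set.Ioi (1:ℝ), c * r ^ (-2:ℝ) = c := by
  rw [integral_const_mul, int_rm2, mul_one]

lemma htilde_bound00 (h : CZCond d 1 CK H) {p : EuclideanSpace ℝ (Fin m) × ℝ} (hp : p ≠ 0) :
    ‖Htilde d H p‖ ≤ CK 0 0 * pnorm p ^ (-d) := by
  have hb : ‖Htilde d H p‖ ≤ ∫ r in Set.Ioi (1:ℝ), (CK 0 0 * pnorm p ^ (-d)) * r ^ (-2:ℝ) := by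
    apply MeasureTheory.norm_integral_le_of_norm_le (bound_int _)
    rw [ae_restrict_iff' measurableSet_Ioi]
    filter_upwards with r hr
    have hr0 : (0:ℝ) < r := lt_trans one_pos hr
    have hb2 := h.2 0 0 (by norm_num) (r • p.1) (r ^ 2 * p.2) (dil_ne hr0 hp)
    simp only [iteratedDeriv_zero, norm_iteratedFDeriv_zero, Nat.cast_zero] at hb2
    rw [show (-d - 0 - 2 * 0 : ℝ) = -d from by ring] at hb2
    rw [show pnorm ((r • p.1, r ^ 2 * p.2) : EuclideanSpace ℝ (Fin m) × ℝ)
        = r * pnorm (p.1, p.2) from pnorm_scale hr0 p.1 p.2, Prod.mk.eta] at hb2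
    rw [Real.mul_rpow hr0.le (pnorm_nonneg p)] at hb2
    have hnn : ‖r ^ d * H (r • p.1, r ^ 2 * p.2) / r ^ 2‖
        = r ^ d / r ^ (2:ℕ) * ‖H (r • p.1, r ^ 2 * p.2)‖ := by
      rw [norm_div, norm_mul, Real.norm_eq_abs (r ^ d), abs_of_pos (by positivity),
        Real.norm_eq_abs (r ^ 2), abs_of_pos (by positivity)]
      ring
    have e := rc2 hr0 d (-d)
    rw [show d + -d - 2 = (-2:ℝ) from by ring] at e
    calc ‖r ^ d * H (r • p.1, r ^ 2 * p.2) / r ^ 2‖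
        = r ^ d / r ^ (2:ℕ) * ‖H (r • p.1, r ^ 2 * p.2)‖ := hnn
      _ ≤ r ^ d / r ^ (2:ℕ) * (CK 0 0 * (r ^ (-d) * pnorm p ^ (-d))) :=
          mul_le_mul_of_nonneg_left hb2 (by positivity)
      _ = CK 0 0 * pnorm p ^ (-d) * r ^ (-2:ℝ) := by
          linear_combination (CK 0 0 * pnorm p ^ (-d)) * e
  rwa [int_c_rm2] at hb

lemma htilde_fderiv_apply (h : CZCond d 1 CK H) (hd0 : 0 ≤ d)
    {p : EuclideanSpace ℝ (Fin m) × ℝ} (hp : p ≠ 0) (w : EuclideanSpace ℝ (Fin m) × ℝ) :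
    fderiv ℝ (Htilde d H) p w = ∫ r in Set.Ioi (1:ℝ), G d H p r w := by
  rw [(htilde_hasFDerivAt h hd0 hp).fderiv]
  exact ContinuousLinearMap.integral_apply (integrable_G h hd0 hp) w

lemma htilde_fderiv_apply_le (h : CZCond d 1 CK H) (hd0 : 0 ≤ d)
    {p : EuclideanSpace ℝ (Fin m) × ℝ} (hp : p ≠ 0) (v : EuclideanSpace ℝ (Fin m)) (s : ℝ) :
    ‖fderiv ℝ (Htilde d H) p (v, s)‖
      ≤ CK 1 0 * pnorm p ^ (-d - 1) * ‖v‖ + CK 0 1 * pnorm p ^ (-d - 2) * |s| := by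
  rw [htilde_fderiv_apply h hd0 hp]
  have hb : ‖∫ r in Set.Ioi (1:ℝ), G d H p r (v, s)‖ ≤ ∫ r in Set.Ioi (1:ℝ),
      (CK 1 0 * pnorm p ^ (-d - 1) * ‖v‖ + CK 0 1 * pnorm p ^ (-d - 2) * |s|) * r ^ (-2:ℝ) := by
    apply MeasureTheory.norm_integral_le_of_norm_le (bound_int _)
    rw [ae_restrict_iff' measurableSet_Ioi]
    filter_upwards with r hr
    have hr0 : (0:ℝ) < r := lt_trans one_pos hr
    refine (G_apply_bound h hr0 hp v s).trans (le_of_eq (by ring))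
  rwa [int_c_rm2] at hb

lemma htilde_even (heven : ∀ (x : EuclideanSpace ℝ (Fin m)) (t : ℝ), H (-x, t) = H (x, t)) :
    ∀ (x : EuclideanSpace ℝ (Fin m)) (t : ℝ), Htilde d H (-x, t) = Htilde d H (x, t) := by
  intro x t
  unfold Htilde
  simp only [smul_neg, heven]

lemma htilde_odd (hodd : ∀ (x : EuclideanSpace ℝ (Fin m)) (t : ℝ), H (-x, t) = -H (x, t)) :
    ∀ (x : EuclideanSpace ℝ (Fin m)) (t : ℝ), Htilde d H (-x, t) = -Htilde d H (x, t) := by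
  intro x t
  unfold Htilde
  simp only [smul_neg, hodd, mul_neg, neg_div, integral_neg]


lemma htilde_bound10 (h : CZCond d 1 CK H) (hd0 : 0 ≤ d)
    (x : EuclideanSpace ℝ (Fin m)) (t : ℝ) (hxt : ((x, t) : EuclideanSpace ℝ (Fin m) × ℝ) ≠ 0) :
    ‖fderiv ℝ (fun y => Htilde d H (y, t)) x‖ ≤ CK 1 0 * pnorm (x, t) ^ (-d - 1) := by
  have hD := (htilde_hasFDerivAt h hd0 hxt)
  set L := fderiv ℝ (Htilde d H) ((x, t) : EuclideanSpace ℝ (Fin m) × ℝ) with hL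
  have h1 : HasFDerivAt (fun y => Htilde d H (y, t))
      (L.comp (ContinuousLinearMap.inl ℝ (EuclideanSpace ℝ (Fin m)) ℝ)) x := by
    have := (hD.differentiableAt.hasFDerivAt).comp x (hasFDerivAt_prodMk_left (𝕜 := ℝ) x t)
    exact this
  rw [h1.fderiv]
  have h10 := CK_nonneg h (j := 1) (k := 0) (by norm_num)
  apply ContinuousLinearMap.opNorm_le_bound
  · have := pnorm_nonneg ((x, t) : EuclideanSpace ℝ (Fin m) × ℝ)
    exact mul_nonneg h10 (Real.rpow_nonneg this _)
  · intro v
    have : (L.comp (ContinuousLinearMap.inl ℝ (EuclideanSpace ℝ (Fin m)) ℝ)) v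
        = L (v, 0) := rfl
    rw [this]
    have hb := htilde_fderiv_apply_le h hd0 hxt v 0
    simpa using hb
lemma htilde_bound01 (h : CZCond d 1 CK H) (hd0 : 0 ≤ d)
    (x : EuclideanSpace ℝ (Fin m)) (t : ℝ) (hxt : ((x, t) : EuclideanSpace ℝ (Fin m) × ℝ) ≠ 0) :
    ‖deriv (fun s => Htilde d H (x, s)) t‖ ≤ CK 0 1 * pnorm (x, t) ^ (-d - 2) := by
  have hD := (htilde_hasFDerivAt h hd0 hxt)
  set L := fderiv ℝ (Htilde d H) ((x, t) : EuclideanSpace ℝ (Fin m) × ℝ) with hL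
  have h2 : HasDerivAt (fun s => Htilde d H (x, s))
      (L ((0 : EuclideanSpace ℝ (Fin m)), 1)) t := by
    have hcurve : HasDerivAt (fun s : ℝ => ((x, s) : EuclideanSpace ℝ (Fin m) × ℝ))
        (((0 : EuclideanSpace ℝ (Fin m)), 1)) t :=
      (hasDerivAt_const t x).prodMk (hasDerivAt_id t)
    have := (hD.differentiableAt.hasFDerivAt).comp_hasDerivAt t hcurve
    exact this
  rw [h2.deriv]
  have hb := htilde_fderiv_apply_le h hd0 hxt 0 1
  simpa using hb


end S9

/-- for `H ∈ C-Z(1)(i)` on `ℝ^n` (`d = n+1`), the integral defining `H̃`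
converges absolutely; `H̃` again satisfies the C-Z(1)(i) condition, with constants which
are dimensional multiples `c j k * CK j k` of the original constants; and `H̃` inherits
evenness/oddness in the space variable from `H`. -/
theorem statement9 (n : ℕ) (hn : 2 ≤ n) :
    ∃ c : ℕ → ℕ → ℝ,  -- dimensional constants, depending only on n
    ∀ (CK : ℕ → ℕ → ℝ) (H : EuclideanSpace ℝ (Fin (n - 1)) × ℝ → ℝ),
      CZCond (n + 1 : ℝ) 1 CK H →
      (∀ p : EuclideanSpace ℝ (Fin (n - 1)) × ℝ, p ≠ 0 →
        IntegrableOn (fun r : ℝ => r ^ (n + 1 : ℝ) * H (r • p.1, r ^ 2 * p.2) / r ^ 2)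
          (Set.Ioi (1 : ℝ))) ∧
      CZCond (n + 1 : ℝ) 1 (fun j k => c j k * CK j k) (Htilde (n + 1 : ℝ) H) ∧
      ((∀ (x : EuclideanSpace ℝ (Fin (n - 1))) (t : ℝ), H (-x, t) = H (x, t)) →
        ∀ (x : EuclideanSpace ℝ (Fin (n - 1))) (t : ℝ),
          Htilde (n + 1 : ℝ) H (-x, t) = Htilde (n + 1 : ℝ) H (x, t)) ∧
      ((∀ (x : EuclideanSpace ℝ (Fin (n - 1))) (t : ℝ), H (-x, t) = -H (x, t)) →
        ∀ (x : EuclideanSpace ℝ (Fin (n - 1))) (t : ℝ),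
          Htilde (n + 1 : ℝ) H (-x, t) = -Htilde (n + 1 : ℝ) H (x, t)) := by
  refine ⟨fun _ _ => (1:ℝ), fun CK H h => ?_⟩
  have hd0 : (0:ℝ) ≤ (n + 1 : ℝ) := by positivity
  refine ⟨fun p hp => S9.integrable_integrand h hp, ⟨S9.htilde_contDiffOn h hd0, ?_⟩,
    S9.htilde_even, S9.htilde_odd⟩
  intro j k hjk x t hxt
  simp only [one_mul]
  match j, k, hjk with
  | 1, 1, hjk => exact absurd hjk (by norm_num)
  | (j+2), k, hjk => exact absurd hjk (by omega)
  | 1, (k+1), hjk => exact absurd hjk (by omega)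
  | 0, (k+2), hjk => exact absurd hjk (by omega)
  | 0, 0, _ =>
    simp only [iteratedDeriv_zero, norm_iteratedFDeriv_zero, Nat.cast_zero]
    rw [show (-(n + 1 : ℝ) - 0 - 2 * 0 : ℝ) = -(n + 1 : ℝ) from by ring]
    exact S9.htilde_bound00 h hxt
  | 1, 0, _ =>
    simp only [iteratedDeriv_zero, Nat.cast_zero, Nat.cast_one]
    rw [show ‖iteratedFDeriv ℝ 1 (fun y => Htilde (n + 1 : ℝ) H (y, t)) x‖
        = ‖fderiv ℝ (fun y => Htilde (n + 1 : ℝ) H (y, t)) x‖ from by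
      rw [← norm_iteratedFDeriv_fderiv (n := 0), norm_iteratedFDeriv_zero]]
    rw [show (-(n + 1 : ℝ) - 1 - 2 * 0 : ℝ) = -(n + 1 : ℝ) - 1 from by ring]
    exact S9.htilde_bound10 h hd0 x t hxt
  | 0, 1, _ =>
    simp only [iteratedDeriv_one, norm_iteratedFDeriv_zero, Nat.cast_zero, Nat.cast_one]
    rw [show (-(n + 1 : ℝ) - 0 - 2 * 1 : ℝ) = -(n + 1 : ℝ) - 2 from by ring]
    exact S9.htilde_bound01 h hd0 x t hxt
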